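/- Let G=(V,E,R,x,η) be a knowledge graph where x is a feature map and η is a pairwise coloring satisfying target node distinguishability, and let q ∈ R be a query relation. Then for every T ≥ 0 and every history function f, there exists a C-MPNN with T layers and history function f such that for all 0 ≤ t ≤ T, the coloring rawl_2^{(t)} is equivalent to h_q^{(t)}: for all u,v,u',v' ∈ V, rawl_2^{(t)}(u,v) = rawl_2^{(t)}(u',v') if and only if h_q^{(t)}(u,v) = h_q^{(t)}(u',v'). -/

import Mathlib

/-- A knowledge graph: a finite set of facts `r(u,v)` (stored as triples `(r,u,v)`)
together with a node coloring. -/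
structure KG (V R D : Type) where
  edges : Finset (R × V × V)
  color : V → D

namespace KG

variable {V R D D₂ X : Type}

/-- For a fact `r(u,v)` we say `u ∈ N_r(v)`.  `G.msgMS g v` is the multiset
`{{ (g w, r) : w ∈ N_r(v), r ∈ R }}`. -/
def msgMS [DecidableEq V] (G : KG V R D) (g : V → X) (v : V) : Multiset (X × R) :=
  (G.edges.val.filter (fun e => e.2.2 = v)).map (fun e => (g e.2.1, e.1))

end KG

/-- Color type of the relational local 1-WL test after `t` rounds (τ is the identity pairing). -/
def Color1 (D R : Type) : ℕ → Type
  | 0 => D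
  | t + 1 => Color1 D R t × Multiset (Color1 D R t × R)

/-- The relational local 1-WL test `rwl₁`. -/
def rwl1 {V R D : Type} [DecidableEq V] (G : KG V R D) : (t : ℕ) → V → Color1 D R t
  | 0 => G.color
  | t + 1 => fun v => (rwl1 G t v, G.msgMS (rwl1 G t) v)

/-- The relational asymmetric local 2-WL test `rawl₂` with initial pairwise coloring `η`. -/
def rawl2 {V R D D₂ : Type} [DecidableEq V] (G : KG V R D) (η : V → V → D₂) :
    (t : ℕ) → V → V → Color1 D₂ R t
  | 0 => η
  | t + 1 => fun u v => (rawl2 G η t u v, G.msgMS (rawl2 G η t u) v)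

/-- Color type of the relational symmetric local 2-WL test after `t` rounds. -/
def Color2 (D R : Type) : ℕ → Type
  | 0 => D
  | t + 1 => Color2 D R t × Multiset (Color2 D R t × R) × Multiset (Color2 D R t × R)

/-- The relational symmetric local 2-WL test `rwl₂` with initial pairwise coloring `η`. -/
def rwl2 {V R D D₂ : Type} [DecidableEq V] (G : KG V R D) (η : V → V → D₂) :
    (t : ℕ) → V → V → Color2 D₂ R t
  | 0 => η
  | t + 1 => fun u v =>
      (rwl2 G η t u v, G.msgMS (fun w => rwl2 G η t w v) u, G.msgMS (rwl2 G η t u) v)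

/-- The augmented knowledge graph `G⁺` with fresh inverse relations (`Sum.inr r` is `r⁻`). -/
def KG.aug {V R D : Type} [DecidableEq V] [DecidableEq R] (G : KG V R D) : KG V (R ⊕ R) D where
  edges := G.edges.image (fun e => (Sum.inl e.1, e.2)) ∪
    (G.edges.filter (fun e => e.2.1 ≠ e.2.2)).image (fun e => (Sum.inr e.1, e.2.2, e.2.1))
  color := G.color

/-- The graph `G²` of pairs: facts `r((u,w),(u,v))` for `r(w,v) ∈ E`, colored by `η`. -/
def KG.sq {V R D D₂ : Type} [Fintype V] [DecidableEq V] [DecidableEq R]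
    (G : KG V R D) (η : V → V → D₂) : KG (V × V) R D₂ where
  edges := (Finset.univ ×ˢ G.edges).image
      (fun p => (p.2.1, (p.1, p.2.2.1), (p.1, p.2.2.2)))
  color := fun p => η p.1 p.2

/-- A relational message passing neural network (R-MPNN) with feature dimensions `d t`:
a history function `f` (non-decreasing, `f t ≤ t`) and, per layer, arbitrary
relation-specific message functions, an aggregation on finite multisets and an update. -/
structure RMPNN (R : Type) (d : ℕ → ℕ) where
  f : ℕ → ℕ
  f_mono : Monotone f
  f_le : ∀ t, f t ≤ t
  M : ℕ → Type
  A : ℕ → Type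
  msg : (t : ℕ) → R → (Fin (d t) → ℝ) → M t
  agg : (t : ℕ) → Multiset (M t) → A t
  upd : (t : ℕ) → (Fin (d (f t)) → ℝ) → A t → Fin (d (t + 1)) → ℝ

/-- Features `h^(t)_v` computed by an R-MPNN on `G` from initial features `x`. -/
def RMPNN.h {V R D : Type} [DecidableEq V] {d : ℕ → ℕ} (N : RMPNN R d) (G : KG V R D)
    (x : V → Fin (d 0) → ℝ) : (t : ℕ) → V → Fin (d t) → ℝ
  | 0 => x
  | t + 1 => fun v =>
      N.upd t (N.h G x (N.f t) v)
        (N.agg t ((G.edges.val.filter (fun e => e.2.2 = v)).map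
          (fun e => N.msg t e.1 (N.h G x t e.2.1))))
termination_by t => t
decreasing_by
  · exact Nat.lt_succ_of_le (N.f_le t)
  · exact Nat.lt_succ_self t

/-- A conditional message passing neural network (C-MPNN) with feature dimensions `d t`;
the relation-specific message functions additionally take the query relation. -/
structure CMPNN (R : Type) (d : ℕ → ℕ) where
  f : ℕ → ℕ
  f_mono : Monotone f
  f_le : ∀ t, f t ≤ t
  M : ℕ → Type
  A : ℕ → Type
  msg : (t : ℕ) → R → (Fin (d t) → ℝ) → R → M t
  agg : (t : ℕ) → Multiset (M t) → A t
  upd : (t : ℕ) → (Fin (d (f t)) → ℝ) → A t → Fin (d (t + 1)) → ℝ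

/-- Features `h^(t)_{v|u,q}` computed by a C-MPNN on `G` for query `q` with
initialization `δ`; `CMPNN.h N G q δ t u v = h_q^(t)(u,v)`. -/
def CMPNN.h {V R D : Type} [DecidableEq V] {d : ℕ → ℕ} (N : CMPNN R d) (G : KG V R D)
    (q : R) (δ : V → V → R → Fin (d 0) → ℝ) : (t : ℕ) → V → V → Fin (d t) → ℝ
  | 0 => fun u v => δ u v q
  | t + 1 => fun u v =>
      N.upd t (N.h G q δ (N.f t) u v)
        (N.agg t ((G.edges.val.filter (fun e => e.2.2 = v)).map
          (fun e => N.msg t e.1 (N.h G q δ t u e.2.1) q)))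
termination_by t => t
decreasing_by
  · exact Nat.lt_succ_of_le (N.f_le t)
  · exact Nat.lt_succ_self t


noncomputable section CMPNNAux

open Classical

variable {V R D D₂ : Type} [Fintype V] [DecidableEq V] [DecidableEq R]

/-- Real encoding of a `rawl2` color via its equivalence class of pairs. -/
noncomputable def encC (G : KG V R D) (η : V → V → D₂) (t : ℕ) (c : Color1 D₂ R t) : ℝ :=
  (((Fintype.equivFin (Finset (V × V)))
    (Finset.univ.filter (fun p : V × V => rawl2 G η t p.1 p.2 = c)) : ℕ) : ℝ)

lemma encC_inj (G : KG V R D) (η : V → V → D₂) (t : ℕ) {a b a' b' : V}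
    (h : encC G η t (rawl2 G η t a b) = encC G η t (rawl2 G η t a' b')) :
    rawl2 G η t a b = rawl2 G η t a' b' := by
  classical
  unfold encC at h
  have h1 : ((Fintype.equivFin (Finset (V × V)))
        (Finset.univ.filter (fun p : V × V => rawl2 G η t p.1 p.2 = rawl2 G η t a b)) : ℕ)
      = ((Fintype.equivFin (Finset (V × V)))
        (Finset.univ.filter (fun p : V × V => rawl2 G η t p.1 p.2 = rawl2 G η t a' b')) : ℕ) := by
    exact_mod_cast h
  have h2 := (Fintype.equivFin (Finset (V × V))).injective (Fin.val_injective h1)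
  have hmem : (a', b') ∈ Finset.univ.filter
      (fun p : V × V => rawl2 G η t p.1 p.2 = rawl2 G η t a' b') := by simp
  rw [← h2] at hmem
  have := (Finset.mem_filter.mp hmem).2
  exact this.symm

/-- Partial inverse of `encC` on the image of `rawl2`. -/
noncomputable def decC (G : KG V R D) (η : V → V → D₂) (t : ℕ) (x : ℝ) :
    Option (Color1 D₂ R t) :=
  if h : ∃ p : V × V, encC G η t (rawl2 G η t p.1 p.2) = x then
    some (rawl2 G η t (Classical.choose h).1 (Classical.choose h).2)
  else none

lemma decC_encC (G : KG V R D) (η : V → V → D₂) (t : ℕ) (a b : V) :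
    decC G η t (encC G η t (rawl2 G η t a b)) = some (rawl2 G η t a b) := by
  have hex : ∃ p : V × V, encC G η t (rawl2 G η t p.1 p.2)
      = encC G η t (rawl2 G η t a b) := ⟨(a, b), rfl⟩
  unfold decC
  rw [dif_pos hex]
  exact congrArg some (encC_inj G η t (Classical.choose_spec hex))

/-- `rawl2 (t+1)` is determined by `rawl2 (f t)` and the step-`t` message multiset. -/
lemma rawl2_of_msg (G : KG V R D) (η : V → V → D₂) :
    ∀ (t s : ℕ), s ≤ t → ∀ u v u' v' : V,
    rawl2 G η s u v = rawl2 G η s u' v' →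
    G.msgMS (rawl2 G η t u) v = G.msgMS (rawl2 G η t u') v' →
    rawl2 G η t u v = rawl2 G η t u' v' := by
  intro t
  induction t with
  | zero =>
    intro s hs u v u' v' h1 _
    interval_cases s
    exact h1
  | succ t ih =>
    intro s hs u v u' v' h1 h2
    rcases Nat.lt_succ_iff_lt_or_eq.mp (Nat.lt_succ_of_le hs) with hs' | hs'
    · have hs'' : s ≤ t := Nat.lt_succ_iff.mp hs'
      have h2' : G.msgMS (rawl2 G η t u) v = G.msgMS (rawl2 G η t u') v' := by
        have := congrArg (Multiset.map (fun cr : Color1 D₂ R (t+1) × R =>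
          (Prod.fst (α := Color1 D₂ R t) (β := Multiset (Color1 D₂ R t × R)) cr.1,
            cr.2))) h2
        simpa [KG.msgMS, Multiset.map_map, Function.comp,
          show ∀ a b, (rawl2 G η (t+1) a b).1 = rawl2 G η t a b from fun _ _ => rfl] using this
      show (rawl2 G η t u v, G.msgMS (rawl2 G η t u) v)
        = (rawl2 G η t u' v', G.msgMS (rawl2 G η t u') v')
      rw [ih s hs'' u v u' v' h1 h2', h2']
    · subst hs'; exact h1

lemma rawl2_succ_of_msg (G : KG V R D) (η : V → V → D₂) (t s : ℕ) (hs : s ≤ t)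
    {u v u' v' : V}
    (h1 : rawl2 G η s u v = rawl2 G η s u' v')
    (h2 : G.msgMS (rawl2 G η t u) v = G.msgMS (rawl2 G η t u') v') :
    rawl2 G η (t+1) u v = rawl2 G η (t+1) u' v' := by
  show (rawl2 G η t u v, G.msgMS (rawl2 G η t u) v)
    = (rawl2 G η t u' v', G.msgMS (rawl2 G η t u') v')
  rw [rawl2_of_msg G η t s hs u v u' v' h1 h2, h2]

/-- The network realizing `rawl2` via the real encoding `encC`. -/
noncomputable def theNet (G : KG V R D) (η : V → V → D₂) (f : ℕ → ℕ)
    (hf_mono : Monotone f) (hf_le : ∀ t, f t ≤ t) : CMPNN R (fun _ => 1) where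
  f := f
  f_mono := hf_mono
  f_le := hf_le
  M := fun _ => ℝ × R
  A := fun _ => Multiset (ℝ × R)
  msg := fun _ r x _ => (x 0, r)
  agg := fun _ m => m
  upd := fun t hist a => fun _ =>
    if h : ∃ p : V × V, hist 0 = encC G η (f t) (rawl2 G η (f t) p.1 p.2) ∧
        a = (G.edges.val.filter (fun e => e.2.2 = p.2)).map
          (fun e => (encC G η t (rawl2 G η t p.1 e.2.1), e.1)) then
      encC G η (t+1) (rawl2 G η (t+1) (Classical.choose h).1 (Classical.choose h).2)
    else 0

noncomputable def theDelta (G : KG V R D) (η : V → V → D₂) :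
    V → V → R → Fin 1 → ℝ :=
  fun u v _ _ => encC G η 0 (rawl2 G η 0 u v)

lemma theNet_h (G : KG V R D) (η : V → V → D₂) (q : R) (f : ℕ → ℕ)
    (hf_mono : Monotone f) (hf_le : ∀ t, f t ≤ t) :
    ∀ (t : ℕ) (u v : V),
      (theNet G η f hf_mono hf_le).h G q (theDelta G η) t u v
        = fun _ => encC G η t (rawl2 G η t u v) := by
  intro t
  induction t using Nat.strong_induction_on with
  | _ t ih =>
    match t with
    | 0 => intro u v; rw [CMPNN.h]; rfl
    | Nat.succ t =>
      intro u v
      have hft := ih (f t) (Nat.lt_succ_of_le (hf_le t))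
      have ht := ih t (Nat.lt_succ_self t)
      rw [CMPNN.h]
      have hNf : (theNet G η f hf_mono hf_le).f = f := rfl
      rw [hNf]
      simp only [hft, ht]
      funext i
      simp only [theNet]
      have hex : ∃ p : V × V,
          (fun _ : Fin 1 => encC G η (f t) (rawl2 G η (f t) u v)) 0
              = encC G η (f t) (rawl2 G η (f t) p.1 p.2) ∧
          ((G.edges.val.filter (fun e => e.2.2 = v)).map
              (fun e => ((fun _ : Fin 1 => encC G η t (rawl2 G η t u e.2.1)) 0, e.1)))
            = (G.edges.val.filter (fun e => e.2.2 = p.2)).map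
              (fun e => (encC G η t (rawl2 G η t p.1 e.2.1), e.1)) :=
        ⟨(u, v), rfl, rfl⟩
      rw [dif_pos hex]
      obtain ⟨h1, h2⟩ := Classical.choose_spec hex
      set p := Classical.choose hex with hp
      have E1 : rawl2 G η (f t) u v = rawl2 G η (f t) p.1 p.2 :=
        encC_inj G η (f t) h1
      have E2 : G.msgMS (rawl2 G η t u) v = G.msgMS (rawl2 G η t p.1) p.2 := by
        have h3 := congrArg (Multiset.map (fun x : ℝ × R => (decC G η t x.1, x.2))) h2
        simp only [Multiset.map_map, Function.comp] at h3
        simp only [decC_encC] at h3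
        have hmap : Multiset.map (fun cr : Color1 D₂ R t × R => (some cr.1, cr.2))
              (G.msgMS (rawl2 G η t u) v)
            = Multiset.map (fun cr : Color1 D₂ R t × R => (some cr.1, cr.2))
              (G.msgMS (rawl2 G η t p.1) p.2) := by
          simpa [KG.msgMS, Multiset.map_map, Function.comp] using h3
        refine Multiset.map_injective ?_ hmap
        intro x y hxy
        have h1' := congrArg Prod.fst hxy
        have h2' := congrArg Prod.snd hxy
        simp only at h1' h2'
        exact Prod.ext (Option.some_injective _ h1') h2'
      exact congrArg (encC G η (t+1))
        (rawl2_succ_of_msg G η t (f t) (hf_le t) E1 E2).symm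

end CMPNNAux

/-- Let `G` be a knowledge graph with pairwise coloring `η` satisfying
target node distinguishability and let `q ∈ R`. For every `T ≥ 0` and every history
function `f`, there is a C-MPNN with `T` layers and history function `f` such that for
all `0 ≤ t ≤ T` the coloring `rawl₂^(t)` is equivalent to `h_q^(t)`. -/
theorem cmpnn_matches_rawl2 {V R D D₂ : Type} [Fintype V] [DecidableEq V] [DecidableEq R]
    (G : KG V R D) (η : V → V → D₂)
    (hη : ∀ u v : V, u ≠ v → η u u ≠ η u v)
    (q : R) (T : ℕ) (f : ℕ → ℕ) (hf_mono : Monotone f) (hf_le : ∀ t, f t ≤ t) :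
    ∃ (d : ℕ → ℕ) (N : CMPNN R d) (δ : V → V → R → Fin (d 0) → ℝ),
      N.f = f ∧
      ∀ t ≤ T, ∀ u v u' v' : V,
        rawl2 G η t u v = rawl2 G η t u' v' ↔
          N.h G q δ t u v = N.h G q δ t u' v' := by
  classical
  refine ⟨fun _ => 1, theNet G η f hf_mono hf_le, theDelta G η, rfl, ?_⟩
  intro t _ u v u' v'
  rw [theNet_h G η q f hf_mono hf_le t u v, theNet_h G η q f hf_mono hf_le t u' v']
  constructor
  · intro h; rw [h]
  · intro h
    exact encC_inj G η t (congrFun h 0)
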